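/- (Sufficiency direction.) Suppose for every x ∈ V there exists a(x) > 0 such that ∏_{y ∈ S(x)} Σ_{u ∈ {−1,1}} exp(Jβ ρ(t,u) + ρ(u,h_y)) = a(x) exp(ρ(t,h_x)) for t ∈ {−1,1}. Then the partition functions satisfy Z_{n−1}^h · ∏_{x ∈ W_{n−1}} a(x) = Z_n^h, and the kernels ζ_n(·,h) are consistent: Σ_{ω_n} ζ_n(σ_{n−1}ω_n, h) = ζ_{n−1}(σ_{n−1}, h). -/

import Mathlib

open scoped BigOperators

variable {V : Type*} [DecidableEq V]

/-- Spheres `Wₙ` around the root of a rooted tree with children map `S`. -/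
def treeSphere (root : V) (S : V → Finset V) : ℕ → Finset V
  | 0 => {root}
  | n + 1 => (treeSphere root S n).biUnion S

/-- Balls `Vₙ = W₀ ∪ ⋯ ∪ Wₙ`. -/
def treeBall (root : V) (S : V → Finset V) (n : ℕ) : Finset V :=
  (Finset.range (n + 1)).biUnion (treeSphere root S)

/-- The Cayley tree of order `k`, rooted at `root`, with children map `S`. -/
structure CayleyTree (V : Type*) [DecidableEq V] (k : ℕ) where
  root : V
  S : V → Finset V
  card_S_root : (S root).card = k + 1
  card_S : ∀ x, x ≠ root → (S x).card = k
  root_not_child : ∀ x, root ∉ S x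
  parent_unique : ∀ y, y ≠ root → ∃! x, y ∈ S x
  reach : ∀ y, ∃ n, y ∈ treeSphere root S n

variable {k : ℕ} (T : CayleyTree V k)

/-- The exponent of the kernel (2.6):
`Jβ Σ_{⟨x,y⟩ ⊆ Vₙ} ρ(σ(x),σ(y)) + Σ_{x ∈ Wₙ} ρ(σ(x), h_x)`;
spins take values in `{-1,1} ≃ ℤˣ`. -/
noncomputable def kernelEnergy (J β : ℝ) (ρ : ℤˣ → ℝ → ℝ) (h : V → ℝ)
    (n : ℕ) (σ : V → ℤˣ) : ℝ :=
  J * β * ∑ x ∈ treeBall T.root T.S n, ∑ y ∈ T.S x ∩ treeBall T.root T.S n,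
      ρ (σ x) ((σ y : ℤ) : ℝ)
    + ∑ x ∈ treeSphere T.root T.S n, ρ (σ x) (h x)

/-- Extend a configuration on the ball `Vₙ` to all of `V` (by `+1` outside;
the energy only depends on coordinates in `Vₙ`). -/
def extendBall (n : ℕ) (τ : treeBall T.root T.S n → ℤˣ) : V → ℤˣ :=
  fun x => if hx : x ∈ treeBall T.root T.S n then τ ⟨x, hx⟩ else 1

/-- The partition function `Z_n^h`. -/
noncomputable def partFn (J β : ℝ) (ρ : ℤˣ → ℝ → ℝ) (h : V → ℝ) (n : ℕ) : ℝ :=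
  ∑ τ : treeBall T.root T.S n → ℤˣ,
    Real.exp (kernelEnergy T J β ρ h n (extendBall T n τ))

/-- The kernel (2.6): `ζₙ(σₙ, h) = (Z_n^h)⁻¹ exp( … )`. -/
noncomputable def kernel (J β : ℝ) (ρ : ℤˣ → ℝ → ℝ) (h : V → ℝ) (n : ℕ)
    (τ : treeBall T.root T.S n → ℤˣ) : ℝ :=
  Real.exp (kernelEnergy T J β ρ h n (extendBall T n τ)) / partFn T J β ρ h n

/-- The configuration on `V_{n+1}` built from `σ` on `Vₙ` and `ω` on the
sphere `W_{n+1}`. -/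
def mergeConf (n : ℕ) (σ : treeBall T.root T.S n → ℤˣ)
    (ω : treeSphere T.root T.S (n + 1) → ℤˣ) :
    treeBall T.root T.S (n + 1) → ℤˣ :=
  fun x => if hx : (x : V) ∈ treeBall T.root T.S n then σ ⟨x, hx⟩
    else if hx' : (x : V) ∈ treeSphere T.root T.S (n + 1) then ω ⟨x, hx'⟩
    else 1

section AuxTree

variable {k : ℕ} (T : CayleyTree V k)

lemma treeSphere_succ (root : V) (S : V → Finset V) (n : ℕ) :
    treeSphere root S (n + 1) = (treeSphere root S n).biUnion S := rfl

lemma mem_sphere_unique : ∀ (m : ℕ) {n : ℕ} {y : V},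
    y ∈ treeSphere T.root T.S m → y ∈ treeSphere T.root T.S n → m = n := by
  intro m
  induction m with
  | zero =>
    intro n y hm hn
    cases n with
    | zero => rfl
    | succ n =>
      simp only [treeSphere, Finset.mem_singleton] at hm
      simp only [treeSphere, Finset.mem_biUnion] at hn
      obtain ⟨x, _, hx⟩ := hn
      exact absurd (hm ▸ hx) (T.root_not_child x)
  | succ m ih =>
    intro n y hm hn
    cases n with
    | zero =>
      simp only [treeSphere, Finset.mem_singleton] at hn
      simp only [treeSphere, Finset.mem_biUnion] at hm
      obtain ⟨x, _, hx⟩ := hm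
      exact absurd (hn ▸ hx) (T.root_not_child x)
    | succ n =>
      simp only [treeSphere, Finset.mem_biUnion] at hm hn
      obtain ⟨x, hxm, hyx⟩ := hm
      obtain ⟨x', hxn, hyx'⟩ := hn
      have hyroot : y ≠ T.root := fun hy => T.root_not_child x (hy ▸ hyx)
      obtain ⟨p, _, hp⟩ := T.parent_unique y hyroot
      have hxx : x = x' := (hp x hyx).trans (hp x' hyx').symm
      subst hxx
      rw [ih hxm hxn]

lemma sphere_disjoint {m n : ℕ} (hmn : m ≠ n) :
    Disjoint (treeSphere T.root T.S m) (treeSphere T.root T.S n) := by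
  rw [Finset.disjoint_left]
  intro y hy hy'
  exact hmn (mem_sphere_unique T _ hy hy')

lemma mem_treeBall {root : V} {S : V → Finset V} {n : ℕ} {y : V} :
    y ∈ treeBall root S n ↔ ∃ m ≤ n, y ∈ treeSphere root S m := by
  simp [treeBall, Nat.lt_succ_iff]

lemma treeBall_succ (root : V) (S : V → Finset V) (n : ℕ) :
    treeBall root S (n + 1) = treeBall root S n ∪ treeSphere root S (n + 1) := by
  show (Finset.range (n + 2)).biUnion _ = _
  rw [Finset.range_add_one, Finset.biUnion_insert, Finset.union_comm]
  rfl

lemma disjoint_ball_sphere {n m : ℕ} (hnm : n < m) :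
    Disjoint (treeBall T.root T.S n) (treeSphere T.root T.S m) := by
  rw [Finset.disjoint_left]
  intro y hy hym
  obtain ⟨j, hj, hyj⟩ := mem_treeBall.mp hy
  exact absurd (mem_sphere_unique T _ hyj hym) (by omega)

lemma ball_subset_ball_succ (n : ℕ) :
    treeBall T.root T.S n ⊆ treeBall T.root T.S (n + 1) := by
  rw [treeBall_succ]; exact Finset.subset_union_left

lemma sphere_subset_ball {m n : ℕ} (hmn : m ≤ n) :
    treeSphere T.root T.S m ⊆ treeBall T.root T.S n :=
  fun y hy => mem_treeBall.mpr ⟨m, hmn, hy⟩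

lemma children_subset_sphere {x : V} {m : ℕ} (hx : x ∈ treeSphere T.root T.S m) :
    T.S x ⊆ treeSphere T.root T.S (m + 1) :=
  fun y hy => Finset.mem_biUnion.mpr ⟨x, hx, hy⟩

lemma children_pairwise_disjoint (s : Finset V) :
    (↑s : Set V).PairwiseDisjoint T.S := by
  intro x _ x' _ hxx
  rw [Function.onFun, Finset.disjoint_left]
  intro y hy hy'
  have hyroot : y ≠ T.root := fun hr => T.root_not_child x (hr ▸ hy)
  obtain ⟨p, _, hp⟩ := T.parent_unique y hyroot
  exact hxx ((hp x hy).trans (hp x' hy').symm)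

noncomputable def par (y : V) : V :=
  if hy : y = T.root then y else (T.parent_unique y hy).choose

lemma par_eq {x y : V} (hy : y ∈ T.S x) : par T y = x := by
  have hyroot : y ≠ T.root := fun hr => T.root_not_child x (hr ▸ hy)
  rw [par, dif_neg hyroot]
  exact ((T.parent_unique y hyroot).choose_spec.2 x hy).symm

end AuxTree
section AuxMerge

variable {k : ℕ} (T : CayleyTree V k)

lemma merge_on_ball (n : ℕ) (σ : treeBall T.root T.S n → ℤˣ)
    (ω : treeSphere T.root T.S (n + 1) → ℤˣ) {x : V} (hx : x ∈ treeBall T.root T.S n) :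
    extendBall T (n + 1) (mergeConf T n σ ω) x = extendBall T n σ x := by
  have hx' : x ∈ treeBall T.root T.S (n + 1) := ball_subset_ball_succ T n hx
  rw [extendBall, dif_pos hx', extendBall, dif_pos hx, mergeConf]
  simp only [dif_pos hx]

lemma merge_on_sphere (n : ℕ) (σ : treeBall T.root T.S n → ℤˣ)
    (ω : treeSphere T.root T.S (n + 1) → ℤˣ) {y : V} (hy : y ∈ treeSphere T.root T.S (n + 1)) :
    extendBall T (n + 1) (mergeConf T n σ ω) y = ω ⟨y, hy⟩ := by
  have hy' : y ∈ treeBall T.root T.S (n + 1) := sphere_subset_ball T le_rfl hy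
  have hyn : y ∉ treeBall T.root T.S n :=
    Finset.disjoint_right.mp (disjoint_ball_sphere T (Nat.lt_succ_self n)) hy
  rw [extendBall, dif_pos hy', mergeConf]
  simp only [dif_neg hyn, dif_pos hy]

lemma merge_bijective (n : ℕ) :
    Function.Bijective (fun p : (treeBall T.root T.S n → ℤˣ) ×
        (treeSphere T.root T.S (n + 1) → ℤˣ) => mergeConf T n p.1 p.2) := by
  constructor
  · rintro ⟨σ, ω⟩ ⟨σ', ω'⟩ hpq
    simp only at hpq
    have h1 : σ = σ' := by
      funext x
      have hx : (x : V) ∈ treeBall T.root T.S (n + 1) := ball_subset_ball_succ T n x.2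
      have := congrFun hpq ⟨x, hx⟩
      simpa only [mergeConf, dif_pos x.2, Subtype.coe_eta] using this
    have h2 : ω = ω' := by
      funext y
      have hyn : (y : V) ∉ treeBall T.root T.S n :=
        Finset.disjoint_right.mp (disjoint_ball_sphere T (Nat.lt_succ_self n)) y.2
      have hy : (y : V) ∈ treeBall T.root T.S (n + 1) := sphere_subset_ball T le_rfl y.2
      have := congrFun hpq ⟨y, hy⟩
      simpa only [mergeConf, dif_neg hyn, dif_pos y.2, Subtype.coe_eta] using this
    rw [h1, h2]
  · intro τ
    refine ⟨⟨fun x => τ ⟨x, ball_subset_ball_succ T n x.2⟩,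
        fun y => τ ⟨y, sphere_subset_ball T le_rfl y.2⟩⟩, ?_⟩
    funext z
    simp only [mergeConf]
    by_cases hz : (z : V) ∈ treeBall T.root T.S n
    · rw [dif_pos hz]
    · rw [dif_neg hz]
      have hz' : (z : V) ∈ treeSphere T.root T.S (n + 1) := by
        obtain ⟨m, hm, hzm⟩ := mem_treeBall.mp z.2
        rcases Nat.lt_succ_iff_lt_or_eq.mp (Nat.lt_succ_of_le hm) with hlt | heq'
        · exact absurd (mem_treeBall.mpr ⟨m, Nat.lt_succ_iff.mp hlt, hzm⟩) hz
        · exact heq' ▸ hzm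
      rw [dif_pos hz']

end AuxMerge
section Core

variable {k : ℕ} (T : CayleyTree V k)

lemma childInter_empty {n : ℕ} {x : V} (hx : x ∈ treeBall T.root T.S n)
    (hxn : x ∉ treeSphere T.root T.S n) :
    T.S x ∩ treeSphere T.root T.S (n + 1) = ∅ := by
  rw [Finset.eq_empty_iff_forall_notMem]
  intro y hy
  obtain ⟨m, hm, hxm⟩ := mem_treeBall.mp hx
  have hmn : m ≠ n := fun hmn => hxn (hmn ▸ hxm)
  have hy1 := children_subset_sphere T hxm (Finset.mem_inter.mp hy).1
  have hy2 := (Finset.mem_inter.mp hy).2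
  exact absurd (mem_sphere_unique T _ hy1 hy2) (by omega)

lemma energy_decomp (J β : ℝ) (ρ : ℤˣ → ℝ → ℝ) (h : V → ℝ) (n : ℕ)
    (σ : treeBall T.root T.S n → ℤˣ) (ω : treeSphere T.root T.S (n + 1) → ℤˣ) :
    kernelEnergy T J β ρ h (n + 1) (extendBall T (n + 1) (mergeConf T n σ ω)) =
      kernelEnergy T J β ρ h n (extendBall T n σ)
        - ∑ x ∈ treeSphere T.root T.S n, ρ (extendBall T n σ x) (h x)
        + ∑ y ∈ (treeSphere T.root T.S (n + 1)).attach,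
            (J * β * ρ (extendBall T n σ (par T ↑y)) ((ω y : ℤ) : ℝ)
              + ρ (ω y) (h ↑y)) := by
  have hedge : (∑ x ∈ treeBall T.root T.S (n + 1),
        ∑ y ∈ T.S x ∩ treeBall T.root T.S (n + 1),
          ρ (extendBall T (n + 1) (mergeConf T n σ ω) x)
            ((extendBall T (n + 1) (mergeConf T n σ ω) y : ℤ) : ℝ)) =
      (∑ x ∈ treeBall T.root T.S n, ∑ y ∈ T.S x ∩ treeBall T.root T.S n,
          ρ (extendBall T n σ x) ((extendBall T n σ y : ℤ) : ℝ))
        + ∑ x ∈ treeSphere T.root T.S n, ∑ y ∈ T.S x,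
            ρ (extendBall T n σ x)
              ((extendBall T (n + 1) (mergeConf T n σ ω) y : ℤ) : ℝ) := by
    rw [treeBall_succ, Finset.sum_union (disjoint_ball_sphere T (Nat.lt_succ_self n))]
    have h2 : (∑ x ∈ treeSphere T.root T.S (n + 1),
        ∑ y ∈ T.S x ∩ (treeBall T.root T.S n ∪ treeSphere T.root T.S (n + 1)),
          ρ (extendBall T (n + 1) (mergeConf T n σ ω) x)
            ((extendBall T (n + 1) (mergeConf T n σ ω) y : ℤ) : ℝ)) = 0 := by
      apply Finset.sum_eq_zero
      intro x hx
      have hempty : T.S x ∩ (treeBall T.root T.S n ∪ treeSphere T.root T.S (n + 1)) = ∅ := by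
        rw [Finset.eq_empty_iff_forall_notMem]
        intro y hy
        have hy1 := children_subset_sphere T hx (Finset.mem_inter.mp hy).1
        have hy2 : y ∈ treeBall T.root T.S (n + 1) := by
          rw [treeBall_succ]; exact (Finset.mem_inter.mp hy).2
        obtain ⟨m, hm, hym⟩ := mem_treeBall.mp hy2
        exact absurd (mem_sphere_unique T _ hy1 hym) (by omega)
      rw [hempty, Finset.sum_empty]
    rw [h2, add_zero]
    have h1 : ∀ x ∈ treeBall T.root T.S n,
        (∑ y ∈ T.S x ∩ (treeBall T.root T.S n ∪ treeSphere T.root T.S (n + 1)),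
          ρ (extendBall T (n + 1) (mergeConf T n σ ω) x)
            ((extendBall T (n + 1) (mergeConf T n σ ω) y : ℤ) : ℝ)) =
        (∑ y ∈ T.S x ∩ treeBall T.root T.S n,
          ρ (extendBall T n σ x) ((extendBall T n σ y : ℤ) : ℝ))
        + ∑ y ∈ T.S x ∩ treeSphere T.root T.S (n + 1),
          ρ (extendBall T n σ x)
            ((extendBall T (n + 1) (mergeConf T n σ ω) y : ℤ) : ℝ) := by
      intro x hx
      rw [Finset.inter_union_distrib_left,
        Finset.sum_union ((disjoint_ball_sphere T (Nat.lt_succ_self n)).mono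
          Finset.inter_subset_right Finset.inter_subset_right)]
      congr 1
      · refine Finset.sum_congr rfl fun y hy => ?_
        rw [merge_on_ball T n σ ω hx, merge_on_ball T n σ ω (Finset.mem_inter.mp hy).2]
      · refine Finset.sum_congr rfl fun y hy => ?_
        rw [merge_on_ball T n σ ω hx]
    rw [Finset.sum_congr rfl h1, Finset.sum_add_distrib]
    congr 1
    rw [← Finset.sum_subset (sphere_subset_ball T le_rfl)
      (fun x hx hxn => by rw [childInter_empty T hx hxn, Finset.sum_empty])]
    refine Finset.sum_congr rfl fun x hx => ?_
    rw [Finset.inter_eq_left.mpr (children_subset_sphere T hx)]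
  have hbnd : (∑ x ∈ treeSphere T.root T.S (n + 1),
        ρ (extendBall T (n + 1) (mergeConf T n σ ω) x) (h x)) =
      ∑ x ∈ treeSphere T.root T.S n, ∑ y ∈ T.S x,
        ρ (extendBall T (n + 1) (mergeConf T n σ ω) y) (h y) := by
    rw [treeSphere_succ, Finset.sum_biUnion (children_pairwise_disjoint T _)]
  have hattach : (∑ y ∈ (treeSphere T.root T.S (n + 1)).attach,
        (J * β * ρ (extendBall T n σ (par T ↑y)) ((ω y : ℤ) : ℝ)
          + ρ (ω y) (h ↑y))) =
      ∑ x ∈ treeSphere T.root T.S n, ∑ y ∈ T.S x,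
        (J * β * ρ (extendBall T n σ x)
            ((extendBall T (n + 1) (mergeConf T n σ ω) y : ℤ) : ℝ)
          + ρ (extendBall T (n + 1) (mergeConf T n σ ω) y) (h y)) := by
    have step1 : (∑ y ∈ (treeSphere T.root T.S (n + 1)).attach,
        (J * β * ρ (extendBall T n σ (par T ↑y)) ((ω y : ℤ) : ℝ)
          + ρ (ω y) (h ↑y))) =
      ∑ y ∈ (treeSphere T.root T.S (n + 1)).attach,
        (J * β * ρ (extendBall T n σ (par T ↑y))
            ((extendBall T (n + 1) (mergeConf T n σ ω) ↑y : ℤ) : ℝ)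
          + ρ (extendBall T (n + 1) (mergeConf T n σ ω) ↑y) (h ↑y)) := by
      refine Finset.sum_congr rfl fun y _ => ?_
      rw [merge_on_sphere T n σ ω y.2, Subtype.coe_eta]
    rw [step1, Finset.sum_attach _ (fun z =>
        J * β * ρ (extendBall T n σ (par T z))
          ((extendBall T (n + 1) (mergeConf T n σ ω) z : ℤ) : ℝ)
        + ρ (extendBall T (n + 1) (mergeConf T n σ ω) z) (h z)),
      treeSphere_succ, Finset.sum_biUnion (children_pairwise_disjoint T _)]
    refine Finset.sum_congr rfl fun x hx => Finset.sum_congr rfl fun y hy => ?_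
    rw [par_eq T hy]
  rw [kernelEnergy, kernelEnergy, hedge, hbnd, hattach]
  simp only [Finset.sum_add_distrib, ← Finset.mul_sum]
  ring

end Core
section Core2

variable {k : ℕ} (T : CayleyTree V k)

lemma sum_exp_merge (J β : ℝ) (ρ : ℤˣ → ℝ → ℝ) (h : V → ℝ) (a : V → ℝ)
    (heq : ∀ (x : V) (t : ℤˣ),
      (∏ y ∈ T.S x,
          ∑ u : ℤˣ, Real.exp (J * β * ρ t ((u : ℤ) : ℝ) + ρ u (h y))) =
        a x * Real.exp (ρ t (h x)))
    (n : ℕ) (σ : treeBall T.root T.S n → ℤˣ) :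
    (∑ ω : treeSphere T.root T.S (n + 1) → ℤˣ,
      Real.exp (kernelEnergy T J β ρ h (n + 1)
        (extendBall T (n + 1) (mergeConf T n σ ω)))) =
    Real.exp (kernelEnergy T J β ρ h n (extendBall T n σ)) *
      ∏ x ∈ treeSphere T.root T.S n, a x := by
  have step1 : (∑ ω : treeSphere T.root T.S (n + 1) → ℤˣ,
      Real.exp (kernelEnergy T J β ρ h (n + 1)
        (extendBall T (n + 1) (mergeConf T n σ ω)))) =
      Real.exp (kernelEnergy T J β ρ h n (extendBall T n σ)
          - ∑ x ∈ treeSphere T.root T.S n, ρ (extendBall T n σ x) (h x)) *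
        ∑ ω : treeSphere T.root T.S (n + 1) → ℤˣ,
          ∏ y ∈ (treeSphere T.root T.S (n + 1)).attach,
            Real.exp (J * β * ρ (extendBall T n σ (par T ↑y)) ((ω y : ℤ) : ℝ)
              + ρ (ω y) (h ↑y)) := by
    rw [Finset.mul_sum]
    refine Finset.sum_congr rfl fun ω _ => ?_
    rw [energy_decomp T J β ρ h n σ ω, Real.exp_add, Real.exp_sum]
  have step2 : (∑ ω : treeSphere T.root T.S (n + 1) → ℤˣ,
      ∏ y ∈ (treeSphere T.root T.S (n + 1)).attach,
        Real.exp (J * β * ρ (extendBall T n σ (par T ↑y)) ((ω y : ℤ) : ℝ)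
          + ρ (ω y) (h ↑y))) =
      ∏ y ∈ (treeSphere T.root T.S (n + 1)).attach,
        ∑ u : ℤˣ,
          Real.exp (J * β * ρ (extendBall T n σ (par T ↑y)) ((u : ℤ) : ℝ)
            + ρ u (h ↑y)) := by
    rw [← Finset.univ_eq_attach, ← Fintype.piFinset_univ]
    exact (Finset.prod_univ_sum (ι := {x // x ∈ treeSphere T.root T.S (n + 1)})
      (fun _ => (Finset.univ : Finset ℤˣ))
      (fun y u => Real.exp (J * β * ρ (extendBall T n σ (par T ↑y)) ((u : ℤ) : ℝ)
        + ρ u (h ↑y)))).symm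
  have step3 : (∏ y ∈ (treeSphere T.root T.S (n + 1)).attach,
      ∑ u : ℤˣ,
        Real.exp (J * β * ρ (extendBall T n σ (par T ↑y)) ((u : ℤ) : ℝ)
          + ρ u (h ↑y))) =
      (∏ x ∈ treeSphere T.root T.S n, a x) *
        Real.exp (∑ x ∈ treeSphere T.root T.S n, ρ (extendBall T n σ x) (h x)) := by
    rw [Finset.prod_attach _ (fun z => ∑ u : ℤˣ,
        Real.exp (J * β * ρ (extendBall T n σ (par T z)) ((u : ℤ) : ℝ) + ρ u (h z))),
      treeSphere_succ, Finset.prod_biUnion (children_pairwise_disjoint T _)]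
    have : ∀ x ∈ treeSphere T.root T.S n,
        (∏ y ∈ T.S x, ∑ u : ℤˣ,
          Real.exp (J * β * ρ (extendBall T n σ (par T y)) ((u : ℤ) : ℝ) + ρ u (h y))) =
        a x * Real.exp (ρ (extendBall T n σ x) (h x)) := by
      intro x hx
      rw [← heq x (extendBall T n σ x)]
      exact Finset.prod_congr rfl fun y hy => by rw [par_eq T hy]
    rw [Finset.prod_congr rfl this, Finset.prod_mul_distrib, Real.exp_sum]
  rw [step1, step2, step3, Real.exp_sub]
  field_simp

end Core2
/-- Sufficiency: if for every `x ∈ V` there is `a(x) > 0` with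
`∏_{y ∈ S(x)} Σ_u exp(Jβ ρ(t,u) + ρ(u,h_y)) = a(x) exp(ρ(t,h_x))` for
`t ∈ {-1,1}`, then the partition functions satisfy
`Z_n^h ∏_{x ∈ W_n} a(x) = Z_{n+1}^h` and the kernels (2.6) are consistent. -/
theorem kernels_consistent_of_boundary_equation (J β : ℝ)
    (ρ : ℤˣ → ℝ → ℝ) (h : V → ℝ) (a : V → ℝ) (ha : ∀ x, 0 < a x)
    (heq : ∀ (x : V) (t : ℤˣ),
      (∏ y ∈ T.S x,
          ∑ u : ℤˣ, Real.exp (J * β * ρ t ((u : ℤ) : ℝ) + ρ u (h y))) =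
        a x * Real.exp (ρ t (h x))) :
    (∀ n : ℕ,
        partFn T J β ρ h n * ∏ x ∈ treeSphere T.root T.S n, a x =
          partFn T J β ρ h (n + 1)) ∧
      ∀ (n : ℕ) (σ : treeBall T.root T.S n → ℤˣ),
        (∑ ω : treeSphere T.root T.S (n + 1) → ℤˣ,
            kernel T J β ρ h (n + 1) (mergeConf T n σ ω)) =
          kernel T J β ρ h n σ := by
  have hpart : ∀ n : ℕ,
      partFn T J β ρ h n * ∏ x ∈ treeSphere T.root T.S n, a x =
        partFn T J β ρ h (n + 1) := by
    intro n
    have h1 : (∑ p : (treeBall T.root T.S n → ℤˣ) ×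
          (treeSphere T.root T.S (n + 1) → ℤˣ),
        Real.exp (kernelEnergy T J β ρ h (n + 1)
          (extendBall T (n + 1) (mergeConf T n p.1 p.2)))) =
        partFn T J β ρ h (n + 1) :=
      Fintype.sum_bijective _ (merge_bijective T n) _ _ (fun p => rfl)
    rw [← h1, Fintype.sum_prod_type, partFn, Finset.sum_mul]
    exact Finset.sum_congr rfl fun σ _ => (sum_exp_merge T J β ρ h a heq n σ).symm
  refine ⟨hpart, fun n σ => ?_⟩
  have hprod : (∏ x ∈ treeSphere T.root T.S n, a x) ≠ 0 :=
    (Finset.prod_pos fun x _ => ha x).ne'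
  simp only [kernel]
  rw [← Finset.sum_div, sum_exp_merge T J β ρ h a heq n σ, ← hpart n,
    mul_div_mul_right _ _ hprod]
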